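/- Let f : ℝⁿ → ℝ be Lipschitz, let P ⊆ ℝⁿ be a compact convex set, let x ∈ int P, and let g : P → ℝ be the convexification of f on P, i.e., the pointwise largest convex function on P that is ≤ f on P. Suppose g(x) = f(x). Then every subgradient of g at x — every φ ∈ ℝⁿ with g(y) ≥ g(x) + φ·(y − x) for all y ∈ P — belongs to the Clarke generalized gradient ∂f(x) = conv{ lim_k ∇f(x_k) : x_k → x with f differentiable at each x_k }. -/

import Mathlib

open scoped BigOperators
open Finset

noncomputable section

/-- Gradient of `f : ℝⁿ → ℝ` as a vector. -/
def grad {n : ℕ} (f : (Fin n → ℝ) → ℝ) (x : Fin n → ℝ) : Fin n → ℝ :=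
  fun i => fderiv ℝ f x (Pi.single i 1)

/-- Clarke generalized gradient of `f` at `x`. -/
def clarkeGrad {n : ℕ} (f : (Fin n → ℝ) → ℝ) (x : Fin n → ℝ) : Set (Fin n → ℝ) :=
  convexHull ℝ { L : Fin n → ℝ | ∃ u : ℕ → Fin n → ℝ,
    (∀ m, DifferentiableAt ℝ f (u m)) ∧
    Filter.Tendsto u Filter.atTop (nhds x) ∧
    Filter.Tendsto (fun m => grad f (u m)) Filter.atTop (nhds L) }

end

open MeasureTheory Filter


lemma abs_le_lip {K : NNReal} {g : ℝ → ℝ} (hg : LipschitzWith K g) {d s : ℝ}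
    (h : HasDerivAt g d s) : |d| ≤ K := by
  have hslope := hasDerivAt_iff_tendsto_slope.mp h
  have habs : Tendsto (fun y => |slope g s y|) (nhdsWithin s {s}ᶜ) (nhds |d|) :=
    (continuous_abs.tendsto d).comp hslope
  refine le_of_tendsto habs ?_
  filter_upwards [self_mem_nhdsWithin] with y hy
  have hy' : y ≠ s := hy
  rw [slope_def_field, abs_div, div_le_iff₀ (abs_pos.mpr (sub_ne_zero.mpr hy'))]
  calc |g y - g s| = dist (g y) (g s) := by rw [Real.dist_eq]
    _ ≤ K * dist y s := hg.dist_le_mul y s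
    _ = K * |y - s| := by rw [Real.dist_eq]

lemma tendsto_seq_nhdsNE (s : ℝ) :
    Tendsto (fun m : ℕ => s + ((m : ℝ) + 1)⁻¹) atTop (nhdsWithin s {s}ᶜ) := by
  apply tendsto_nhdsWithin_of_tendsto_nhds_of_eventually_within
  · have : Tendsto (fun m : ℕ => ((m : ℝ) + 1)⁻¹) atTop (nhds 0) := by
      simpa [one_div] using tendsto_one_div_add_atTop_nhds_zero_nat (𝕜 := ℝ)
    simpa using tendsto_const_nhds.add this
  · refine Filter.Eventually.of_forall fun m => ?_
    simp only [Set.mem_compl_iff, Set.mem_singleton_iff]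
    have hp : (0:ℝ) < ((m : ℝ) + 1)⁻¹ := by positivity
    intro hEq
    nlinarith [hEq]

lemma ftc_ae_le {K : NNReal} {g : ℝ → ℝ} (hg : LipschitzWith K g) {t c : ℝ} (ht : 0 < t)
    (h : ∀ᵐ s : ℝ, s ∈ Set.Ioo (0:ℝ) t → ∃ d, HasDerivAt g d s ∧ d ≤ c) :
    g t - g 0 ≤ c * t := by
  classical
  have hgc : Continuous g := hg.continuous
  set hm : ℕ → ℝ := fun m => ((m : ℝ) + 1)⁻¹ with hhm
  have hmpos : ∀ m, 0 < hm m := fun m => by positivity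
  have h1 : ∀ᵐ s : ℝ, s ∈ Set.Ioo (0:ℝ) t →
      HasDerivAt g (deriv g s) s ∧ deriv g s ≤ c ∧ |deriv g s| ≤ K := by
    filter_upwards [h] with s hs hmem
    obtain ⟨d, hd, hdc⟩ := hs hmem
    have : deriv g s = d := hd.deriv
    exact ⟨this ▸ hd, this ▸ hdc, this ▸ abs_le_lip hg hd⟩
  have hne : ∀ᵐ s : ℝ, s ≠ t := by
    rw [MeasureTheory.ae_iff]; simpa using (measure_singleton t : volume {t} = 0)
  set I : ℕ → ℝ := fun m => ∫ s in Set.Ioc (0:ℝ) t, (g (s + hm m) - g s) / hm m with hI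
  have hInt : ∀ a b : ℝ, IntervalIntegrable g volume a b := fun a b =>
    hgc.intervalIntegrable a b
  -- Step 1 : I tends to g t - g 0
  have hIm : ∀ m, I m = (∫ s in t..(t + hm m), g s) / hm m
      - (∫ s in (0:ℝ)..(hm m), g s) / hm m := by
    intro m
    have e1 : I m = (∫ s in (0:ℝ)..t, (g (s + hm m) - g s)) / hm m := by
      rw [hI]
      rw [intervalIntegral.integral_of_le ht.le, ← MeasureTheory.integral_div]
    have e2 : (∫ s in (0:ℝ)..t, (g (s + hm m) - g s))
        = (∫ s in (0 + hm m)..(t + hm m), g s) - ∫ s in (0:ℝ)..t, g s := by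
      have hcont2 : Continuous (fun s : ℝ => g (s + hm m)) :=
        hgc.comp (continuous_add_right _)
      rw [intervalIntegral.integral_sub (hcont2.intervalIntegrable _ _) (hInt _ _)]
      congr 1
      exact intervalIntegral.integral_comp_add_right g (hm m)
    have e3 : (∫ s in (0 + hm m)..(t + hm m), g s) - ∫ s in (0:ℝ)..t, g s
        = (∫ s in t..(t + hm m), g s) - ∫ s in (0:ℝ)..(hm m), g s := by
      have a1 : (∫ s in (0:ℝ)..(hm m), g s) + ∫ s in (hm m)..(t + hm m), g s
          = ∫ s in (0:ℝ)..(t + hm m), g s :=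
        intervalIntegral.integral_add_adjacent_intervals (hInt _ _) (hInt _ _)
      have a2 : (∫ s in (0:ℝ)..t, g s) + ∫ s in t..(t + hm m), g s
          = ∫ s in (0:ℝ)..(t + hm m), g s :=
        intervalIntegral.integral_add_adjacent_intervals (hInt _ _) (hInt _ _)
      rw [zero_add]
      linarith [a1, a2]
    rw [e1, e2, e3, sub_div]
  have limt : ∀ a : ℝ, Tendsto (fun m => (∫ s in a..(a + hm m), g s) / hm m)
      atTop (nhds (g a)) := by
    intro a
    have hF : HasDerivAt (fun u => ∫ s in a..u, g s) (g a) a :=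
      intervalIntegral.integral_hasDerivAt_right (hInt a a)
        (hgc.stronglyMeasurable.stronglyMeasurableAtFilter) hgc.continuousAt
    have hslope := hasDerivAt_iff_tendsto_slope.mp hF
    have hcomp := hslope.comp (tendsto_seq_nhdsNE a)
    refine hcomp.congr fun m => ?_
    show slope (fun u => ∫ s in a..u, g s) a (a + hm m) = _
    rw [slope_def_field, intervalIntegral.integral_same, sub_zero, add_sub_cancel_left]
  have key1 : Tendsto I atTop (nhds (g t - g 0)) := by
    refine ((limt t).sub (limt 0)).congr fun m => ?_
    rw [zero_add]
    exact (hIm m).symm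
  -- Step 2 : I tends to ∫ deriv g
  have key2 : Tendsto I atTop (nhds (∫ s in Set.Ioc (0:ℝ) t, deriv g s)) := by
    apply MeasureTheory.tendsto_integral_of_dominated_convergence (fun _ => (K:ℝ))
    · intro m
      exact (((hgc.comp (continuous_add_right (hm m))).sub hgc).div_const
        (hm m)).aestronglyMeasurable
    · exact MeasureTheory.integrableOn_const measure_Ioc_lt_top.ne
    · intro m
      refine Filter.Eventually.of_forall fun s => ?_
      rw [Real.norm_eq_abs, abs_div, abs_of_pos (hmpos m), div_le_iff₀ (hmpos m)]
      calc |g (s + hm m) - g s| = dist (g (s + hm m)) (g s) := by rw [Real.dist_eq]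
        _ ≤ K * dist (s + hm m) s := hg.dist_le_mul _ _
        _ = K * hm m := by
              rw [Real.dist_eq]; congr 1
              rw [add_sub_cancel_left]
              exact abs_of_pos (hmpos m)
    · refine (MeasureTheory.ae_restrict_iff' measurableSet_Ioc).2 ?_
      filter_upwards [h1, hne] with s hs hst hsIoc
      have hsIoo : s ∈ Set.Ioo (0:ℝ) t := ⟨hsIoc.1, lt_of_le_of_ne hsIoc.2 hst⟩
      obtain ⟨hder, -, -⟩ := hs hsIoo
      have hslope := hasDerivAt_iff_tendsto_slope.mp hder
      have hcomp := hslope.comp (tendsto_seq_nhdsNE s)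
      refine hcomp.congr fun m => ?_
      show slope g s (s + hm m) = _
      rw [slope_def_field, add_sub_cancel_left]
  have heqI := tendsto_nhds_unique key1 key2
  rw [heqI]
  -- Step 3 : bound the integral
  have hint : MeasureTheory.IntegrableOn (deriv g) (Set.Ioc (0:ℝ) t) volume := by
    refine MeasureTheory.Integrable.mono' (g := fun _ => (K:ℝ))
      (MeasureTheory.integrableOn_const measure_Ioc_lt_top.ne)
      (measurable_deriv g).aestronglyMeasurable ?_
    refine (MeasureTheory.ae_restrict_iff' measurableSet_Ioc).2 ?_
    filter_upwards [h1, hne] with s hs hst hsIoc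
    obtain ⟨-, -, hK⟩ := hs ⟨hsIoc.1, lt_of_le_of_ne hsIoc.2 hst⟩
    simpa using hK
  have hle : ∫ s in Set.Ioc (0:ℝ) t, deriv g s ≤ ∫ _s in Set.Ioc (0:ℝ) t, c := by
    refine MeasureTheory.integral_mono_ae hint
      (MeasureTheory.integrableOn_const measure_Ioc_lt_top.ne) ?_
    refine (MeasureTheory.ae_restrict_iff' measurableSet_Ioc).2 ?_
    filter_upwards [h1, hne] with s hs hst hsIoc
    exact (hs ⟨hsIoc.1, lt_of_le_of_ne hsIoc.2 hst⟩).2.1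
  refine hle.trans ?_
  rw [MeasureTheory.setIntegral_const, Real.volume_real_Ioc_of_le ht.le]
  simp [smul_eq_mul, ENNReal.toReal_ofReal ht.le, mul_comm]


lemma ae_ae_line {n : ℕ} (v : Fin n → ℝ) (N : Set (Fin n → ℝ))
    (hNm : MeasurableSet N) (hN : volume N = 0) :
    ∀ᵐ y : Fin n → ℝ, ∀ᵐ s : ℝ, y + s • v ∉ N := by
  have hmap : Measurable (fun p : (Fin n → ℝ) × ℝ => p.1 + p.2 • v) :=
    measurable_fst.add (measurable_snd.smul_const v)
  set A := (fun p : (Fin n → ℝ) × ℝ => p.1 + p.2 • v) ⁻¹' N with hA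
  have hAm : MeasurableSet A := hmap hNm
  have hA0 : (volume.prod volume) A = 0 := by
    rw [MeasureTheory.Measure.prod_apply_symm hAm]
    have hz : ∀ s : ℝ, volume ((fun y : Fin n → ℝ => (y, s)) ⁻¹' A) = 0 := by
      intro s
      have he : ((fun y : Fin n → ℝ => (y, s)) ⁻¹' A) = (fun y => y + s • v) ⁻¹' N := rfl
      rw [he, measure_preimage_add_right]
      exact hN
    simp [hz]
  have hae : ∀ᵐ p : (Fin n → ℝ) × ℝ ∂(volume.prod volume), p.1 + p.2 • v ∉ N := by
    rw [MeasureTheory.ae_iff]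
    simpa [hA, Set.preimage, not_not] using hA0
  exact MeasureTheory.Measure.ae_ae_of_ae_prod hae

lemma isCompact_convexHull_of_isCompact {n : ℕ} {S : Set (Fin n → ℝ)} (hS : IsCompact S) :
    IsCompact (convexHull ℝ S) := by
  classical
  rcases S.eq_empty_or_nonempty with rfl | ⟨y₀, hy₀⟩
  · simpa using isCompact_empty
  set D : Set ((Fin (n+1) → ℝ) × (Fin (n+1) → Fin n → ℝ)) :=
    (stdSimplex ℝ (Fin (n+1))) ×ˢ (Set.univ.pi fun _ => S) with hD
  have hDc : IsCompact D := (isCompact_stdSimplex _ _).prod (isCompact_univ_pi fun _ => hS)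
  set m : ((Fin (n+1) → ℝ) × (Fin (n+1) → Fin n → ℝ)) → (Fin n → ℝ) :=
    fun p => ∑ i, p.1 i • p.2 i with hm
  have hmc : Continuous m := by
    apply continuous_finset_sum
    intro i _
    exact ((continuous_apply i).comp continuous_fst).smul
      ((continuous_apply i).comp continuous_snd)
  have himg : m '' D = convexHull ℝ S := by
    apply Set.Subset.antisymm
    · rintro _ ⟨⟨wt, pts⟩, ⟨hw, hp⟩, rfl⟩
      exact mem_convexHull_of_exists_fintype wt pts hw.1 hw.2
        (fun i => hp i (Set.mem_univ i)) rfl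
    · intro z hz
      rw [convexHull_eq_union] at hz
      simp only [Set.mem_iUnion] at hz
      obtain ⟨t, hts, hai, hzt⟩ := hz
      have hcard : t.card ≤ n + 1 := by
        have h1 := hai.card_le_finrank_succ
        rw [Fintype.card_coe] at h1
        refine h1.trans ?_
        have h2 : Module.finrank ℝ (vectorSpan ℝ (Set.range (Subtype.val : ↥t → Fin n → ℝ)))
            ≤ Module.finrank ℝ (Fin n → ℝ) := Submodule.finrank_le _
        rw [Module.finrank_fin_fun] at h2
        omega
      have htne : t.Nonempty := by
        rcases t.eq_empty_or_nonempty with rfl | h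
        · simp at hzt
        · exact h
      obtain ⟨p₀, hp₀⟩ := htne
      rw [Finset.convexHull_eq] at hzt
      obtain ⟨w, hw0, hw1, hcm⟩ := hzt
      set k := t.card with hk
      set e : Fin k → Fin n → ℝ := fun j => (t.equivFin.symm j : Fin n → ℝ) with he
      have hemem : ∀ j, e j ∈ t := fun j => (t.equivFin.symm j).2
      set ω : Fin (n+1) → ℝ := fun i => if h : (i : ℕ) < k then w (e ⟨i, h⟩) else 0 with hω
      set q : Fin (n+1) → Fin n → ℝ := fun i => if h : (i : ℕ) < k then e ⟨i, h⟩ else p₀ with hq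
      have hsum_aux : ∀ (M : Type) (_ : AddCommMonoid M) (G : (Fin n → ℝ) → M),
          (∑ i : Fin (n+1), (if h : (i : ℕ) < k then G (e ⟨i, h⟩) else 0)) = ∑ y ∈ t, G y := by
        intro M _ G
        rw [Fin.sum_univ_eq_sum_range (fun j => if h : j < k then G (e ⟨j, h⟩) else 0) (n+1)]
        rw [← Finset.sum_subset (Finset.range_subset_range.2 (by omega : k ≤ n + 1))
          (by intro j _ hj; rw [Finset.mem_range] at hj; simp [hj])]
        rw [← Fin.sum_univ_eq_sum_range (fun j => if h : j < k then G (e ⟨j, h⟩) else 0) k]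
        have : ∀ j : Fin k, (if h : (j : ℕ) < k then G (e ⟨j, h⟩) else 0) = G (e j) := by
          intro j; simp [j.2]
        rw [Finset.sum_congr rfl (fun j _ => this j)]
        have e1 : (∑ j : Fin k, G (e j)) = ∑ a : ↥t, G ↑a :=
          Equiv.sum_comp t.equivFin.symm (fun a : ↥t => G ↑a)
        rw [e1]
        exact Finset.sum_coe_sort t G
      refine ⟨(ω, q), ⟨⟨fun i => ?_, ?_⟩, fun i _ => ?_⟩, ?_⟩
      · by_cases h : (i : ℕ) < k
        · simp only [hω, dif_pos h]; exact hw0 _ (hemem ⟨i, h⟩)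
        · simp [hω, h]
      · show ∑ i : Fin (n+1), ω i = 1
        rw [show (∑ i : Fin (n+1), ω i)
          = ∑ i : Fin (n+1), (if h : (i : ℕ) < k then w (e ⟨i, h⟩) else 0) from rfl]
        rw [hsum_aux ℝ inferInstance (fun y => w y)]
        exact hw1
      · by_cases h : (i : ℕ) < k
        · simp only [hq, dif_pos h]; exact hts (hemem ⟨i, h⟩)
        · simp only [hq, dif_neg h]; exact hts hp₀
      · show (∑ i : Fin (n+1), ω i • q i) = z
        have hpt : ∀ i : Fin (n+1), ω i • q i
            = (if h : (i : ℕ) < k then w (e ⟨i,h⟩) • (e ⟨i,h⟩) else 0) := by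
          intro i
          by_cases h : (i : ℕ) < k <;> simp [hω, hq, h]
        rw [Finset.sum_congr rfl (fun i _ => hpt i)]
        rw [hsum_aux (Fin n → ℝ) inferInstance (fun y => w y • y)]
        rw [Finset.centerMass_eq_of_sum_1 t id hw1] at hcm
        simpa using hcm
  rw [← himg]
  exact hDc.image hmc




lemma directional {n : ℕ} {f : (Fin n → ℝ) → ℝ} {c : NNReal} (hf : LipschitzWith c f)
    {x φ : Fin n → ℝ} {r : ℝ} (hr : 0 < r)
    (hsub : ∀ y : Fin n → ℝ, dist y x < r → f x + ∑ i, φ i * (y i - x i) ≤ f y)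
    (v : Fin n → ℝ) {ε δ₀ : ℝ} (hε : 0 < ε) (hδ₀ : 0 < δ₀) :
    ∃ z, dist z x < δ₀ ∧ DifferentiableAt ℝ f z ∧
      (∑ i, φ i * v i) - ε ≤ fderiv ℝ f z v := by
  by_contra hbad
  push_neg at hbad
  obtain ⟨δ, hδdef⟩ : ∃ δ : ℝ, δ = min δ₀ r := ⟨_, rfl⟩
  have hδ : 0 < δ := hδdef ▸ lt_min hδ₀ hr
  have hδ₁ : δ ≤ δ₀ := hδdef ▸ min_le_left _ _
  have hδ₂ : δ ≤ r := hδdef ▸ min_le_right _ _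
  have hrad : ∀ᵐ z : Fin n → ℝ, DifferentiableAt ℝ f z := hf.ae_differentiableAt
  set B := {z : Fin n → ℝ | ¬ DifferentiableAt ℝ f z} with hB
  have hB0 : volume B = 0 := by
    rw [MeasureTheory.ae_iff] at hrad
    exact hrad
  set N := toMeasurable volume B with hN
  have hN0 : volume N = 0 := by rw [hN, measure_toMeasurable]; exact hB0
  have hNm : MeasurableSet N := measurableSet_toMeasurable _ _
  have hBN : B ⊆ N := subset_toMeasurable _ _
  have hyq := ae_ae_line v N hNm hN0
  obtain ⟨t, htdef⟩ : ∃ t : ℝ, t = δ / (2 * (‖v‖ + 1)) := ⟨_, rfl⟩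
  have ht : 0 < t := by
    rw [htdef]
    apply div_pos hδ
    positivity
  have htv : t * ‖v‖ < δ / 2 := by
    have h1 : t * (‖v‖ + 1) = δ / 2 := by
      rw [htdef]; field_simp
    nlinarith [ht]
  obtain ⟨cε, hcε⟩ : ∃ cε : ℝ, cε = (∑ i, φ i * v i) - ε := ⟨_, rfl⟩
  simp only [← hcε] at hbad
  have key : ∀ y : Fin n → ℝ, dist y x < δ/2 → (∀ᵐ s : ℝ, y + s • v ∉ N) →
      f (y + t • v) - f y ≤ cε * t := by
    intro y hy hae
    have hline : LipschitzWith ‖v‖₊ (fun s : ℝ => y + s • v) := by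
      apply LipschitzWith.of_dist_le_mul
      intro a b
      have h1 : (y + a • v) - (y + b • v) = (a - b) • v := by module
      rw [dist_eq_norm, h1, norm_smul, Real.dist_eq, Real.norm_eq_abs, coe_nnnorm, mul_comm]
    have hcomp : LipschitzWith (c * ‖v‖₊) (fun s : ℝ => f (y + s • v)) := hf.comp hline
    have hmain := ftc_ae_le hcomp ht (c := cε) ?_
    · simpa using hmain
    · filter_upwards [hae] with s hsN hsIoo
      set z := y + s • v with hz
      have hzx : dist z x < δ := by
        have h2 : dist z y ≤ t * ‖v‖ := by
          rw [hz, dist_eq_norm, add_sub_cancel_left, norm_smul, Real.norm_eq_abs,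
            abs_of_pos hsIoo.1]
          exact mul_le_mul_of_nonneg_right hsIoo.2.le (norm_nonneg v)
        calc dist z x ≤ dist z y + dist y x := dist_triangle _ _ _
          _ < t * ‖v‖ + δ/2 := add_lt_add_of_le_of_lt h2 hy
          _ < δ/2 + δ/2 := by linarith [htv]
          _ = δ := by ring
      have hzd : DifferentiableAt ℝ f z := by
        by_contra hc
        exact hsN (hBN hc)
      have hcurve : HasDerivAt (fun s : ℝ => y + s • v) v s := by
        simpa using ((hasDerivAt_id s).smul_const v).const_add y
      have hder : HasDerivAt (fun s : ℝ => f (y + s • v)) (fderiv ℝ f z v) s :=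
        hzd.hasFDerivAt.comp_hasDerivAt s hcurve
      exact ⟨_, hder, (hbad z (lt_of_lt_of_le hzx hδ₁) hzd).le⟩
  -- pass to the limit y → x
  have hxt : f (x + t • v) - f x ≤ cε * t := by
    by_contra hcon
    push_neg at hcon
    obtain ⟨θ, hθdef⟩ : ∃ θ : ℝ, θ = (f (x + t • v) - f x - cε * t) / 2 := ⟨_, rfl⟩
    have hθ : 0 < θ := by rw [hθdef]; linarith
    obtain ⟨ρ, hρdef⟩ : ∃ ρ : ℝ, ρ = min (δ/2) (θ / (2 * (c:ℝ) + 1)) := ⟨_, rfl⟩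
    have hρ : 0 < ρ := by
      rw [hρdef]
      apply lt_min (by linarith)
      positivity
    have hex : ∃ y ∈ Metric.ball x ρ, ∀ᵐ s : ℝ, y + s • v ∉ N := by
      by_contra hno
      push_neg at hno
      have hsubset : Metric.ball x ρ ⊆ {y : Fin n → ℝ | ¬ ∀ᵐ s : ℝ, y + s • v ∉ N} :=
        fun y hy => hno y hy
      have h0 : volume {y : Fin n → ℝ | ¬ ∀ᵐ s : ℝ, y + s • v ∉ N} = 0 := by
        rw [MeasureTheory.ae_iff] at hyq
        exact hyq
      have := measure_mono_null hsubset h0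
      exact (Metric.measure_ball_pos volume x hρ).ne' this
    obtain ⟨y, hyball, hyae⟩ := hex
    have hydist : dist y x < ρ := Metric.mem_ball.1 hyball
    have hρle : ρ ≤ δ / 2 := hρdef ▸ min_le_left _ _
    have hkey := key y (lt_of_lt_of_le hydist hρle) hyae
    have e1 : f (x + t • v) - f (y + t • v) ≤ c * ρ := by
      have := hf.dist_le_mul (x + t • v) (y + t • v)
      rw [dist_add_right, Real.dist_eq] at this
      calc f (x + t • v) - f (y + t • v) ≤ |f (x + t • v) - f (y + t • v)| := le_abs_self _
        _ ≤ c * dist x y := this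
        _ ≤ c * ρ := by
            apply mul_le_mul_of_nonneg_left _ c.coe_nonneg
            rw [dist_comm] at hydist
            exact hydist.le
    have e2 : f y - f x ≤ c * ρ := by
      have := hf.dist_le_mul y x
      rw [Real.dist_eq] at this
      calc f y - f x ≤ |f y - f x| := le_abs_self _
        _ ≤ c * dist y x := this
        _ ≤ c * ρ := mul_le_mul_of_nonneg_left hydist.le c.coe_nonneg
    have e3 : (c:ℝ) * ρ ≤ θ / 2 := by
      have h1 : ρ ≤ θ / (2 * (c:ℝ) + 1) := hρdef ▸ min_le_right _ _
      have h2 : (0:ℝ) ≤ c := c.coe_nonneg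
      rw [le_div_iff₀ (by positivity)] at h1
      nlinarith [hρ]
    have : f (x + t • v) - f x ≤ cε * t + θ := by nlinarith [hkey, e1, e2, e3]
    rw [hθdef] at this
    linarith
  -- contradiction with the subgradient inequality
  have hdist : dist (x + t • v) x < r := by
    rw [dist_eq_norm, add_sub_cancel_left, norm_smul, Real.norm_eq_abs, abs_of_pos ht]
    calc t * ‖v‖ < δ/2 := htv
      _ < δ := by linarith
      _ ≤ r := hδ₂
  have hs := hsub (x + t • v) hdist
  have hsum : (∑ i, φ i * ((x + t • v) i - x i)) = t * ∑ i, φ i * v i := by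
    rw [Finset.mul_sum]
    apply Finset.sum_congr rfl
    intro i _
    simp only [Pi.add_apply, Pi.smul_apply, smul_eq_mul, add_sub_cancel_left]
    ring
  rw [hsum] at hs
  have : t * ∑ i, φ i * v i ≤ cε * t := by linarith
  rw [hcε] at this
  nlinarith [ht, hε]
lemma clm_repr {n : ℕ} (ℓ : (Fin n → ℝ) →L[ℝ] ℝ) (w : Fin n → ℝ) :
    ℓ w = ∑ i, w i * ℓ (Pi.single i 1) := by
  classical
  have hw : w = ∑ i, w i • (Pi.single i (1:ℝ) : Fin n → ℝ) := by
    funext j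
    simp [Finset.sum_apply, Pi.single_apply]
  conv_lhs => rw [hw]
  rw [map_sum]
  simp [smul_eq_mul]

/-- let `f : ℝⁿ → ℝ` be Lipschitz, `P` compact convex, `x ∈ int P`, and
`g` the convexification of `f` on `P` (largest convex function on `P` dominated by `f`),
with `g(x) = f(x)`. Then every subgradient `φ` of `g` at `x` belongs to the Clarke
generalized gradient `∂f(x)`. -/
theorem stmt_16 {n : ℕ} (f : (Fin n → ℝ) → ℝ) (c : NNReal) (hf : LipschitzWith c f)
    (P : Set (Fin n → ℝ)) (hPcomp : IsCompact P) (hPconv : Convex ℝ P)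
    (x : Fin n → ℝ) (hx : x ∈ interior P)
    (g : (Fin n → ℝ) → ℝ)
    (hgconv : ConvexOn ℝ P g) (hgle : ∀ y ∈ P, g y ≤ f y)
    (hgmax : ∀ g' : (Fin n → ℝ) → ℝ, ConvexOn ℝ P g' → (∀ y ∈ P, g' y ≤ f y) →
      ∀ y ∈ P, g' y ≤ g y)
    (hgx : g x = f x)
    (φ : Fin n → ℝ) (hφ : ∀ y ∈ P, g x + ∑ i, φ i * (y i - x i) ≤ g y) :
    φ ∈ clarkeGrad f x := by
  classical
  obtain ⟨r, hr, hball⟩ : ∃ r > 0, Metric.ball x r ⊆ P := by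
    rw [mem_interior_iff_mem_nhds, Metric.mem_nhds_iff] at hx
    obtain ⟨ε, hε, h⟩ := hx
    exact ⟨ε, hε, h⟩
  have hsub : ∀ y : Fin n → ℝ, dist y x < r → f x + ∑ i, φ i * (y i - x i) ≤ f y := by
    intro y hy
    have hyP : y ∈ P := hball (Metric.mem_ball.2 hy)
    have h1 := hφ y hyP
    have h2 := hgle y hyP
    rw [hgx] at h1
    linarith
  set S := { L : Fin n → ℝ | ∃ u : ℕ → Fin n → ℝ,
    (∀ m, DifferentiableAt ℝ f (u m)) ∧
    Filter.Tendsto u Filter.atTop (nhds x) ∧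
    Filter.Tendsto (fun m => grad f (u m)) Filter.atTop (nhds L) } with hSdef
  show φ ∈ convexHull ℝ S
  have hinv : Tendsto (fun k : ℕ => ((k:ℝ)+1)⁻¹) atTop (nhds 0) := by
    simpa [one_div] using tendsto_one_div_add_atTop_nhds_zero_nat (𝕜 := ℝ)
  have hgradb : ∀ z : Fin n → ℝ, grad f z ∈ Metric.closedBall (0 : Fin n → ℝ) c := by
    intro z
    rw [Metric.mem_closedBall, dist_zero_right]
    rw [pi_norm_le_iff_of_nonneg c.coe_nonneg]
    intro i
    calc ‖grad f z i‖ = ‖fderiv ℝ f z (Pi.single i 1)‖ := rfl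
      _ ≤ ‖fderiv ℝ f z‖ * ‖(Pi.single i (1:ℝ) : Fin n → ℝ)‖ := (fderiv ℝ f z).le_opNorm _
      _ ≤ c * 1 := by
          apply mul_le_mul (norm_fderiv_le_of_lipschitz ℝ hf) ?_ (norm_nonneg _) c.coe_nonneg
          rw [Pi.norm_single]
          simp
      _ = c := mul_one _
  have hrepr : ∀ (w v : Fin n → ℝ), fderiv ℝ f w v = ∑ i, grad f w i * v i := by
    intro w v
    rw [clm_repr (fderiv ℝ f w) v]
    exact Finset.sum_congr rfl fun i _ => mul_comm _ _
  have hdir : ∀ v : Fin n → ℝ, ∃ L ∈ S, (∑ i, φ i * v i) ≤ ∑ i, L i * v i := by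
    intro v
    have hstep : ∀ m : ℕ, ∃ z, dist z x < ((m:ℝ)+1)⁻¹ ∧ DifferentiableAt ℝ f z ∧
        (∑ i, φ i * v i) - ((m:ℝ)+1)⁻¹ ≤ fderiv ℝ f z v :=
      fun m => directional hf hr hsub v (by positivity) (by positivity)
    choose z hz1 hz2 hz3 using hstep
    obtain ⟨L, hLb, σ, hσ, hLt⟩ :=
      (isCompact_closedBall (0:Fin n → ℝ) (c:ℝ)).tendsto_subseq (fun m => hgradb (z m))
    have hLt' : Tendsto (fun m => grad f (z (σ m))) atTop (nhds L) := hLt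
    have hzx : Tendsto (fun m => z (σ m)) atTop (nhds x) := by
      rw [tendsto_iff_dist_tendsto_zero]
      refine squeeze_zero (fun m => dist_nonneg) (fun m => ?_) hinv
      calc dist (z (σ m)) x ≤ ((σ m:ℝ)+1)⁻¹ := (hz1 _).le
        _ ≤ ((m:ℝ)+1)⁻¹ := by
            have hm : (m:ℝ) + 1 ≤ (σ m : ℝ) + 1 := by
              exact_mod_cast Nat.succ_le_succ hσ.le_apply
            exact inv_anti₀ (by positivity) hm
    refine ⟨L, ⟨fun m => z (σ m), fun m => hz2 _, hzx, hLt'⟩, ?_⟩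
    have hA : Tendsto (fun m => ∑ i, grad f (z (σ m)) i * v i) atTop
        (nhds (∑ i, L i * v i)) := by
      apply tendsto_finset_sum
      intro i _
      exact ((tendsto_pi_nhds.1 hLt') i).mul tendsto_const_nhds
    have hB : Tendsto (fun m => (∑ i, φ i * v i) - ((σ m:ℝ)+1)⁻¹) atTop
        (nhds ((∑ i, φ i * v i) - 0)) :=
      tendsto_const_nhds.sub (hinv.comp hσ.tendsto_atTop)
    have hle : ∀ m, (∑ i, φ i * v i) - ((σ m:ℝ)+1)⁻¹ ≤ ∑ i, grad f (z (σ m)) i * v i := by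
      intro m
      rw [← hrepr]
      exact hz3 _
    have := le_of_tendsto_of_tendsto' hB hA hle
    simpa using this
  have hScl : IsClosed S := by
    rw [← closure_subset_iff_isClosed]
    intro L hL
    have hex : ∀ k : ℕ, ∃ zk, DifferentiableAt ℝ f zk ∧ dist zk x < ((k:ℝ)+1)⁻¹ ∧
        dist (grad f zk) L < ((k:ℝ)+1)⁻¹ := by
      intro k
      obtain ⟨L', hL'S, hL'd⟩ := Metric.mem_closure_iff.1 hL (((k:ℝ)+1)⁻¹/2) (by positivity)
      obtain ⟨u, hu1, hu2, hu3⟩ := hL'S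
      have e1 : ∀ᶠ m in atTop, u m ∈ Metric.ball x (((k:ℝ)+1)⁻¹) :=
        hu2 (Metric.ball_mem_nhds x (by positivity))
      have e2 : ∀ᶠ m in atTop, grad f (u m) ∈ Metric.ball L' (((k:ℝ)+1)⁻¹/2) :=
        hu3 (Metric.ball_mem_nhds L' (by positivity))
      obtain ⟨m, hm1, hm2⟩ := (e1.and e2).exists
      refine ⟨u m, hu1 m, Metric.mem_ball.1 hm1, ?_⟩
      calc dist (grad f (u m)) L ≤ dist (grad f (u m)) L' + dist L' L := dist_triangle _ _ _
        _ < ((k:ℝ)+1)⁻¹/2 + ((k:ℝ)+1)⁻¹/2 := by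
            rw [dist_comm] at hL'd
            exact add_lt_add (Metric.mem_ball.1 hm2) hL'd
        _ = ((k:ℝ)+1)⁻¹ := by ring
    choose zk hk1 hk2 hk3 using hex
    refine ⟨zk, hk1, ?_, ?_⟩
    · rw [tendsto_iff_dist_tendsto_zero]
      exact squeeze_zero (fun k => dist_nonneg) (fun k => (hk2 k).le) hinv
    · rw [tendsto_iff_dist_tendsto_zero]
      exact squeeze_zero (fun k => dist_nonneg) (fun k => (hk3 k).le) hinv
  have hSbd : S ⊆ Metric.closedBall (0 : Fin n → ℝ) c := by
    rintro L ⟨u, hu1, hu2, hu3⟩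
    exact Metric.isClosed_closedBall.mem_of_tendsto hu3
      (Filter.Eventually.of_forall fun m => hgradb (u m))
  have hScpt : IsCompact S :=
    (isCompact_closedBall (0 : Fin n → ℝ) (c:ℝ)).of_isClosed_subset hScl hSbd
  by_contra hnot
  obtain ⟨ℓ, u, hu1, hu2⟩ := geometric_hahn_banach_closed_point
    (convex_convexHull ℝ S) (isCompact_convexHull_of_isCompact hScpt).isClosed hnot
  obtain ⟨L, hLS, hLe⟩ := hdir (fun i => ℓ (Pi.single i 1))
  have h1 : ℓ L < u := hu1 L (subset_convexHull ℝ S hLS)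
  have h2 : ℓ φ ≤ ℓ L := by
    rw [clm_repr ℓ φ, clm_repr ℓ L]
    exact hLe
  linarith
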